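/- Let m ≥ 1, let r₁ ≤ r₂ ≤ ⋯ ≤ r_m be positive integers, let λ₁, …, λ_m > 0, let ϱ₀ ≥ 0, and let c_{j,i} ≥ 0 be given constants for all 1 ≤ i < j ≤ m. Then there exist constants g₁, …, g_m > 0 (independent of κ) and θ* > 1 such that for every κ ≥ θ*, the quantities defined recursively by ℓ_m = g_m·κ and ℓ_i = g_i·(ℓ_{i+1})^{r_{i+1} − r_i + 1} for i = m−1, …, 1 satisfy: (λ_m/2)ℓ_m² − ϱ₀ ≥ κ·ℓ_m, and for every 1 ≤ i ≤ m−1, (λ_i/4)ℓ_i² − Σ_{j=i+1}^{m} c_{j,i}·ℓ_j^{2(r_j − r_i + 1)} − ϱ₀ ≥ κ·ℓ_i. -/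
import Mathlib

private lemma stmt7_key_aux (C g lam : ℝ) (h4 : 4 * (C + 1) ≤ g * lam)
    (hg : 1 ≤ g) (hC : 0 ≤ C) : C + g ≤ lam / 4 * g ^ 2 := by
  nlinarith [mul_le_mul_of_nonneg_right h4 (by linarith : (0:ℝ) ≤ g),
    mul_nonneg hC (by linarith : (0:ℝ) ≤ g - 1)]

open Finset in
/-- Lemma 4: recursive design of the high-gain parameters.  With nondecreasing
positive integers `r 1 ≤ ⋯ ≤ r m`, positive `λ i`, `ϱ₀ ≥ 0` and nonnegative
constants `c j i`, there exist gains `g i > 0` (independent of `κ`) and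
`θ* > 1` such that for all `κ ≥ θ*`, the recursively defined
`ℓ m = g m κ`, `ℓ i = g i (ℓ (i+1))^(r (i+1) − r i + 1)` satisfy the stated
inequalities. -/
theorem stmt_7 (m : ℕ) (hm : 1 ≤ m)
    (r : ℕ → ℕ) (hr_pos : ∀ i, 1 ≤ i → i ≤ m → 1 ≤ r i)
    (hr_mono : ∀ i, 1 ≤ i → i < m → r i ≤ r (i + 1))
    (lam : ℕ → ℝ) (hlam : ∀ i, 1 ≤ i → i ≤ m → 0 < lam i)
    (ϱ₀ : ℝ) (hϱ₀ : 0 ≤ ϱ₀)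
    (c : ℕ → ℕ → ℝ) (hc : ∀ i j, 1 ≤ i → i < j → j ≤ m → 0 ≤ c j i) :
    ∃ g : ℕ → ℝ, (∀ i, 1 ≤ i → i ≤ m → 0 < g i) ∧
      ∃ θ : ℝ, 1 < θ ∧
        ∀ κ : ℝ, θ ≤ κ →
          ∀ ℓ : ℕ → ℝ, ℓ m = g m * κ →
            (∀ i, 1 ≤ i → i < m → ℓ i = g i * (ℓ (i + 1)) ^ (r (i + 1) - r i + 1)) →
            (lam m / 2 * (ℓ m) ^ 2 - ϱ₀ ≥ κ * ℓ m ∧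
             ∀ i, 1 ≤ i → i < m →
               lam i / 4 * (ℓ i) ^ 2
                 - (∑ j ∈ Icc (i + 1) m, c j i * (ℓ j) ^ (2 * (r j - r i + 1)))
                 - ϱ₀ ≥ κ * ℓ i) := by
  classical
  set C : ℕ → ℝ := fun i => ϱ₀ + ∑ j ∈ Icc (i + 1) m, c j i with hCdef
  set g : ℕ → ℝ := fun i => max 1 (4 * (C i + 1) / lam i) with hgdef
  have hg1 : ∀ i, (1 : ℝ) ≤ g i := fun i => le_max_left _ _
  have hgpos : ∀ i, (0 : ℝ) < g i := fun i => lt_of_lt_of_le one_pos (hg1 i)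
  have hCnn : ∀ i, 1 ≤ i → 0 ≤ C i := by
    intro i h1
    refine add_nonneg hϱ₀ (Finset.sum_nonneg ?_)
    intro j hj
    rw [Finset.mem_Icc] at hj
    exact hc i j h1 (by omega) hj.2
  have hgkey : ∀ i, 1 ≤ i → i ≤ m → C i + g i ≤ lam i / 4 * (g i) ^ 2 := by
    intro i h1 him
    have hl := hlam i h1 him
    have h4 : 4 * (C i + 1) / lam i ≤ g i := le_max_right _ _
    rw [div_le_iff₀ hl] at h4
    exact stmt7_key_aux _ _ _ h4 (hg1 i) (hCnn i h1)
  -- monotonicity of r on [1, m]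
  have hrm : ∀ b a, 1 ≤ a → a ≤ b → b ≤ m → r a ≤ r b := by
    intro b
    induction b with
    | zero => intro a h1 hab _; omega
    | succ n ih =>
        intro a h1 hab hbm
        rcases eq_or_lt_of_le hab with h | h
        · rw [h]
        · exact le_trans (ih a h1 (by omega) (by omega)) (hr_mono n (by omega) (by omega))
  refine ⟨g, fun i _ _ => hgpos i, 2, one_lt_two, ?_⟩
  intro κ hκ ℓ hℓm hrec
  have hκ1 : (1 : ℝ) ≤ κ := by linarith
  have hκ0 : (0 : ℝ) < κ := by linarith
  -- all ℓ k are ≥ κ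
  have down : ∀ d k, 1 ≤ k → k ≤ m → m - k ≤ d → κ ≤ ℓ k := by
    intro d
    induction d with
    | zero =>
        intro k h1 hk hd
        have hkm : k = m := by omega
        subst hkm
        rw [hℓm]
        nlinarith [hg1 k, hκ0]
    | succ d ih =>
        intro k h1 hk hd
        by_cases hkm : k = m
        · subst hkm; rw [hℓm]; nlinarith [hg1 k, hκ0]
        · have hklt : k < m := lt_of_le_of_ne hk hkm
          have hnext : κ ≤ ℓ (k + 1) := ih (k + 1) (by omega) (by omega) (by omega)
          have h1ℓ : (1 : ℝ) ≤ ℓ (k + 1) := le_trans hκ1 hnext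
          rw [hrec k h1 hklt]
          calc κ ≤ ℓ (k + 1) := hnext
            _ = ℓ (k + 1) ^ 1 := (pow_one _).symm
            _ ≤ ℓ (k + 1) ^ (r (k + 1) - r k + 1) := pow_le_pow_right₀ h1ℓ (by omega)
            _ ≤ g k * ℓ (k + 1) ^ (r (k + 1) - r k + 1) := by
                have h0 : (0 : ℝ) ≤ ℓ (k + 1) ^ (r (k + 1) - r k + 1) :=
                  pow_nonneg (by linarith) _
                nlinarith [hg1 k]
  have hκℓ : ∀ k, 1 ≤ k → k ≤ m → κ ≤ ℓ k := fun k h1 hk => down (m - k) k h1 hk le_rfl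
  have hℓ1 : ∀ k, 1 ≤ k → k ≤ m → (1 : ℝ) ≤ ℓ k := fun k h1 hk => le_trans hκ1 (hκℓ k h1 hk)
  -- chain bound
  have chain : ∀ d k j, 1 ≤ k → k ≤ j → j ≤ m → j - k ≤ d →
      ℓ j ^ (r j - r k + 1) ≤ ℓ k := by
    intro d
    induction d with
    | zero =>
        intro k j h1 hkj hjm hd
        have : k = j := by omega
        subst this
        simp [Nat.sub_self]
    | succ d ih =>
        intro k j h1 hkj hjm hd
        by_cases h : k = j
        · subst h; simp [Nat.sub_self]
        · have hklt : k < j := lt_of_le_of_ne hkj h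
          have hih : ℓ j ^ (r j - r (k + 1) + 1) ≤ ℓ (k + 1) :=
            ih (k + 1) j (by omega) (by omega) hjm (by omega)
          have hr1 : r k ≤ r (k + 1) := hr_mono k h1 (by omega)
          have hr2 : r (k + 1) ≤ r j := hrm j (k + 1) (by omega) (by omega) hjm
          have hexp : r j - r k + 1 ≤ (r j - r (k + 1) + 1) * (r (k + 1) - r k + 1) := by
            have h1' : r j - r k = (r j - r (k + 1)) + (r (k + 1) - r k) := by omega
            rw [h1']
            nlinarith [Nat.zero_le ((r j - r (k + 1)) * (r (k + 1) - r k))]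
          have h1j : (1 : ℝ) ≤ ℓ j := hℓ1 j (by omega) hjm
          have h1k : (1 : ℝ) ≤ ℓ (k + 1) := hℓ1 (k + 1) (by omega) (by omega)
          rw [hrec k h1 (by omega)]
          calc ℓ j ^ (r j - r k + 1)
              ≤ ℓ j ^ ((r j - r (k + 1) + 1) * (r (k + 1) - r k + 1)) :=
                pow_le_pow_right₀ h1j hexp
            _ = (ℓ j ^ (r j - r (k + 1) + 1)) ^ (r (k + 1) - r k + 1) := pow_mul _ _ _
            _ ≤ ℓ (k + 1) ^ (r (k + 1) - r k + 1) :=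
                pow_le_pow_left₀ (pow_nonneg (by linarith [h1j] : (0:ℝ) ≤ ℓ j) _) hih _
            _ ≤ g k * ℓ (k + 1) ^ (r (k + 1) - r k + 1) := by
                have h0 : (0 : ℝ) ≤ ℓ (k + 1) ^ (r (k + 1) - r k + 1) :=
                  pow_nonneg (by linarith [h1k] : (0:ℝ) ≤ ℓ (k + 1)) _
                nlinarith [hg1 k]
  constructor
  · -- case i = m
    have hkey : ϱ₀ + g m ≤ lam m / 4 * (g m) ^ 2 := by
      have h := hgkey m hm le_rfl
      have hCm : C m = ϱ₀ := by
        simp only [hCdef]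
        rw [Finset.Icc_eq_empty (by omega)]
        simp
      rw [hCm] at h
      exact h
    rw [hℓm]
    have hκ2 : (1 : ℝ) ≤ κ ^ 2 := one_le_pow₀ hκ1
    nlinarith [mul_le_mul_of_nonneg_right hkey (sq_nonneg κ),
      mul_nonneg hϱ₀ (by linarith : (0:ℝ) ≤ κ ^ 2 - 1),
      mul_nonneg (hgpos m).le (sq_nonneg κ)]
  · intro i h1 him
    set p : ℕ := r (i + 1) - r i + 1 with hp
    set T : ℝ := ℓ (i + 1) ^ p with hT
    have hℓi : ℓ i = g i * T := hrec i h1 him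
    have hℓip1 : (1 : ℝ) ≤ ℓ (i + 1) := hℓ1 (i + 1) (by omega) (by omega)
    have hT1 : (1 : ℝ) ≤ T := one_le_pow₀ hℓip1
    have hT0 : (0 : ℝ) ≤ T := by linarith
    have hκT : κ ≤ T := by
      calc κ ≤ ℓ (i + 1) := hκℓ (i + 1) (by omega) (by omega)
        _ = ℓ (i + 1) ^ 1 := (pow_one _).symm
        _ ≤ T := pow_le_pow_right₀ hℓip1 (by omega)
    -- bound each term of the sum by c j i * T ^ 2
    have hterm : ∀ j ∈ Icc (i + 1) m,
        c j i * ℓ j ^ (2 * (r j - r i + 1)) ≤ c j i * T ^ 2 := by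
      intro j hj
      rw [Finset.mem_Icc] at hj
      have hcnn : 0 ≤ c j i := hc i j h1 (by omega) hj.2
      have h1j : (1 : ℝ) ≤ ℓ j := hℓ1 j (by omega) hj.2
      have hch : ℓ j ^ (r j - r (i + 1) + 1) ≤ ℓ (i + 1) :=
        chain (j - (i + 1)) (i + 1) j (by omega) hj.1 hj.2 le_rfl
      have hr1 : r i ≤ r (i + 1) := hr_mono i h1 him
      have hr2 : r (i + 1) ≤ r j := hrm j (i + 1) (by omega) hj.1 hj.2
      have hexp : r j - r i + 1 ≤ (r j - r (i + 1) + 1) * p := by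
        have h1' : r j - r i = (r j - r (i + 1)) + (r (i + 1) - r i) := by omega
        rw [hp, h1']
        nlinarith [Nat.zero_le ((r j - r (i + 1)) * (r (i + 1) - r i))]
      have hjT : ℓ j ^ (r j - r i + 1) ≤ T := by
        calc ℓ j ^ (r j - r i + 1)
            ≤ ℓ j ^ ((r j - r (i + 1) + 1) * p) := pow_le_pow_right₀ h1j hexp
          _ = (ℓ j ^ (r j - r (i + 1) + 1)) ^ p := pow_mul _ _ _
          _ ≤ ℓ (i + 1) ^ p := pow_le_pow_left₀ (pow_nonneg (by linarith) _) hch _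
          _ = T := rfl
      have hsq : ℓ j ^ (2 * (r j - r i + 1)) ≤ T ^ 2 := by
        rw [Nat.mul_comm, pow_mul]
        exact pow_le_pow_left₀ (pow_nonneg (by linarith) _) hjT 2
      exact mul_le_mul_of_nonneg_left hsq hcnn
    have hS : (∑ j ∈ Icc (i + 1) m, c j i * ℓ j ^ (2 * (r j - r i + 1)))
        ≤ (∑ j ∈ Icc (i + 1) m, c j i) * T ^ 2 := by
      rw [Finset.sum_mul]
      exact Finset.sum_le_sum hterm
    have hkey : ϱ₀ + (∑ j ∈ Icc (i + 1) m, c j i) + g i ≤ lam i / 4 * (g i) ^ 2 := by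
      have h := hgkey i h1 (le_of_lt him)
      simp only [hCdef] at h
      linarith
    have hT2 : (1 : ℝ) ≤ T ^ 2 := one_le_pow₀ hT1
    have hϱT : ϱ₀ ≤ ϱ₀ * T ^ 2 := le_mul_of_one_le_right hϱ₀ hT2
    have hκℓi : κ * (g i * T) ≤ g i * T ^ 2 := by
      have h := mul_le_mul_of_nonneg_left (mul_le_mul_of_nonneg_right hκT hT0) (hgpos i).le
      calc κ * (g i * T) = g i * (κ * T) := by ring
        _ ≤ g i * (T * T) := h
        _ = g i * T ^ 2 := by ring
    have e2 : ϱ₀ * T ^ 2 + (∑ j ∈ Icc (i + 1) m, c j i) * T ^ 2 + g i * T ^ 2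
        ≤ lam i / 4 * (g i * T) ^ 2 := by
      calc ϱ₀ * T ^ 2 + (∑ j ∈ Icc (i + 1) m, c j i) * T ^ 2 + g i * T ^ 2
          = (ϱ₀ + (∑ j ∈ Icc (i + 1) m, c j i) + g i) * T ^ 2 := by ring
        _ ≤ (lam i / 4 * (g i) ^ 2) * T ^ 2 :=
            mul_le_mul_of_nonneg_right hkey (sq_nonneg T)
        _ = lam i / 4 * (g i * T) ^ 2 := by ring
    rw [hℓi]
    linarith [hS, hϱT, hκℓi, e2]
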